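/- Let X and D be persistence diagrams, let (D₀,…,D_n) be a greedy PD sketch of D, and let ε_i = d_H(flat(D_i) ∪ Δ, flat(D) ∪ Δ) be the i-th insertion radius. Then for every i, |d_B(X, D) − d_B(X, D_i)| ≤ ε_i. -/

import Mathlib

open Metric

/-- The diagonal in the plane. -/
def diag : Set (ℝ × ℝ) := {p | p.1 = p.2}

/-- A persistence diagram: a finite multiset of points strictly above the diagonal
(the diagonal itself, with infinite multiplicity, is implicit). -/
structure PD where
  pts : Multiset (ℝ × ℝ)
  above : ∀ p ∈ pts, p.1 < p.2

/-- The set of distinct off-diagonal points of a persistence diagram. -/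
def PD.flat (A : PD) : Set (ℝ × ℝ) := {p | p ∈ A.pts}

/-- A (partial, multiplicity-aware) matching between persistence diagrams. -/
structure PDMatching (A B : PD) where
  pairs : Multiset ((ℝ × ℝ) × (ℝ × ℝ))
  subA : pairs.map Prod.fst ≤ A.pts
  subB : pairs.map Prod.snd ≤ B.pts

/-- Bottleneck cost of a matching: max over matched pairs of their distance, and over
unmatched off-diagonal points of their distance to the diagonal. -/
noncomputable def PDMatching.cost {A B : PD} (M : PDMatching A B) : ℝ :=
  ((M.pairs.map fun pq => dist pq.1 pq.2) +
      (((A.pts - M.pairs.map Prod.fst) + (B.pts - M.pairs.map Prod.snd)).map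
        fun q => infDist q diag)).fold max 0

/-- Bottleneck distance between persistence diagrams. -/
noncomputable def bottleneckDist (A B : PD) : ℝ :=
  sInf {c | ∃ M : PDMatching A B, M.cost = c}

/-- `q` is a nearest point to `b` in the set `S`. -/
def isNearest (S : Set (ℝ × ℝ)) (b q : ℝ × ℝ) : Prop :=
  q ∈ S ∧ ∀ r ∈ S, dist b q ≤ dist b r

/-- The natural reweighting determined by a nearest-point assignment `NN`:
each point `a` gets multiplicity equal to the number of points `b` of `B`
(with multiplicity) with `NN b = a`; mass sent to the diagonal is dropped. -/
noncomputable def naturalReweighting (B : PD) (NN : ℝ × ℝ → ℝ × ℝ) : PD where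
  pts := (B.pts.map NN).filter fun q => q.1 < q.2
  above := fun p hp => (Multiset.mem_filter.mp hp).2

/-- The set `{p_j : j < i}` of the first `i` points of an ordering. -/
def prefixSet {n : ℕ} (p : Fin n → ℝ × ℝ) (i : ℕ) : Set (ℝ × ℝ) :=
  {x | ∃ j : Fin n, (j : ℕ) < i ∧ p j = x}

/-- A greedy ordering of the distinct off-diagonal points of a persistence diagram `D`,
together with, for each prefix, a fixed nearest-point assignment used to form the
natural reweightings.  `S_i = prefixSet p i ∪ Δ`. -/
structure GreedySketch (D : PD) (n : ℕ) where
  p : Fin n → ℝ × ℝ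
  inj : Function.Injective p
  range_eq : Set.range p = D.flat
  greedy : ∀ i : Fin n,
    infDist (p i) (prefixSet p i ∪ diag) =
      hausdorffDist (prefixSet p i ∪ diag) (D.flat ∪ diag)
  NN : ℕ → ℝ × ℝ → ℝ × ℝ
  NN_nearest : ∀ i ≤ n, ∀ b ∈ D.pts, isNearest (prefixSet p i ∪ diag) b (NN i b)

/-- The `i`-th diagram `D_i` of the greedy PD sketch: the natural reweighting, with
respect to `D`, of the `i`-th prefix. -/
noncomputable def GreedySketch.approx {D : PD} {n : ℕ} (G : GreedySketch D n) (i : ℕ) : PD :=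
  naturalReweighting D (G.NN i)

/-- The `i`-th insertion radius `ε_i = d_H(S_i, flat D ∪ Δ)`. -/
noncomputable def GreedySketch.eps {D : PD} {n : ℕ} (G : GreedySketch D n) (i : ℕ) : ℝ :=
  hausdorffDist (prefixSet G.p i ∪ diag) (D.flat ∪ diag)

-- helpers
lemma fold_max_nonneg (s : Multiset ℝ) : 0 ≤ s.fold max 0 := by
  induction s using Multiset.induction_on with
  | empty => simp
  | cons a s ih => rw [Multiset.fold_cons_left]; exact ih.trans (le_max_right _ _)

lemma le_fold_max {s : Multiset ℝ} {x : ℝ} (h : x ∈ s) : x ≤ s.fold max 0 := by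
  induction s using Multiset.induction_on with
  | empty => simp at h
  | cons a s ih =>
    rw [Multiset.fold_cons_left]
    rcases Multiset.mem_cons.mp h with rfl | h
    · exact le_max_left _ _
    · exact (ih h).trans (le_max_right _ _)

lemma fold_max_le {s : Multiset ℝ} {c : ℝ} (h0 : 0 ≤ c) (h : ∀ x ∈ s, x ≤ c) :
    s.fold max 0 ≤ c := by
  induction s using Multiset.induction_on with
  | empty => simpa using h0
  | cons a s ih =>
    rw [Multiset.fold_cons_left]
    exact max_le (h a (Multiset.mem_cons_self _ _))
      (ih fun x hx => h x (Multiset.mem_cons_of_mem hx))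

lemma PDMatching.cost_nonneg {A B : PD} (M : PDMatching A B) : 0 ≤ M.cost :=
  fold_max_nonneg _

lemma PDMatching.cost_pair_le {A B : PD} (M : PDMatching A B) {pq}
    (h : pq ∈ M.pairs) : dist pq.1 pq.2 ≤ M.cost :=
  le_fold_max (Multiset.mem_add.mpr (Or.inl (Multiset.mem_map_of_mem _ h)))

lemma PDMatching.cost_unA_le {A B : PD} (M : PDMatching A B) {q}
    (h : q ∈ A.pts - M.pairs.map Prod.fst) : infDist q diag ≤ M.cost :=
  le_fold_max (Multiset.mem_add.mpr (Or.inr (Multiset.mem_map_of_mem _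
    (Multiset.mem_add.mpr (Or.inl h)))))

lemma PDMatching.cost_unB_le {A B : PD} (M : PDMatching A B) {q}
    (h : q ∈ B.pts - M.pairs.map Prod.snd) : infDist q diag ≤ M.cost :=
  le_fold_max (Multiset.mem_add.mpr (Or.inr (Multiset.mem_map_of_mem _
    (Multiset.mem_add.mpr (Or.inr h)))))

lemma cost_le_of_forall {A B : PD} (M : PDMatching A B) {c : ℝ} (h0 : 0 ≤ c)
    (h1 : ∀ pq ∈ M.pairs, dist pq.1 pq.2 ≤ c)
    (h2 : ∀ q ∈ A.pts - M.pairs.map Prod.fst, infDist q diag ≤ c)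
    (h3 : ∀ q ∈ B.pts - M.pairs.map Prod.snd, infDist q diag ≤ c) :
    M.cost ≤ c := by
  unfold PDMatching.cost
  apply fold_max_le h0
  intro x hx
  rcases Multiset.mem_add.mp hx with hx | hx
  · obtain ⟨pq, hpq, rfl⟩ := Multiset.mem_map.mp hx; exact h1 pq hpq
  · obtain ⟨q, hq, rfl⟩ := Multiset.mem_map.mp hx
    rcases Multiset.mem_add.mp hq with hq | hq
    · exact h2 q hq
    · exact h3 q hq

lemma lift_pairs {α β γ : Type*} [DecidableEq α] [DecidableEq β] (f : β → α) :
    ∀ (P : Multiset (γ × α)) (t : Multiset β), P.map Prod.snd ≤ t.map f →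
      ∃ Q : Multiset (γ × β), Q.map Prod.snd ≤ t ∧
        Q.map (fun pq => (pq.1, f pq.2)) = P := by
  intro P
  induction P using Multiset.induction_on with
  | empty => exact fun t _ => ⟨0, by simp, by simp⟩
  | cons pq P ih =>
    intro t h
    rw [Multiset.map_cons] at h
    have hmem : pq.2 ∈ t.map f := Multiset.mem_of_le h (Multiset.mem_cons_self _ _)
    obtain ⟨b, hb, hfb⟩ := Multiset.mem_map.mp hmem
    have h2 : P.map Prod.snd ≤ (t.map f).erase pq.2 := by
      have h' := Multiset.erase_le_erase pq.2 h
      rwa [Multiset.erase_cons_head] at h'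
    have herase : (t.map f).erase pq.2 = (t.erase b).map f := by
      conv_lhs => rw [← Multiset.cons_erase hb]
      rw [Multiset.map_cons, hfb, Multiset.erase_cons_head]
    rw [herase] at h2
    obtain ⟨Q, hQ1, hQ2⟩ := ih (t.erase b) h2
    refine ⟨(pq.1, b) ::ₘ Q, ?_, ?_⟩
    · rw [Multiset.map_cons]
      calc b ::ₘ Q.map Prod.snd ≤ b ::ₘ t.erase b := Multiset.cons_le_cons _ hQ1
        _ = t := Multiset.cons_erase hb
    · rw [Multiset.map_cons, hQ2, hfb]

lemma msub_split {α : Type*} [DecidableEq α] (x s t : Multiset α) (h : s + t ≤ x) :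
    x - s = (x - (s + t)) + t := by
  have hs : s ≤ x := le_trans (Multiset.le_add_right _ _) h
  have h1 : (x - s) + s = x := tsub_add_cancel_of_le hs
  have h2 : ((x - (s + t)) + t) + s = x := by
    rw [add_assoc, add_comm t s, tsub_add_cancel_of_le h]
  exact add_right_cancel (h1.trans h2.symm)

open EMetric in
lemma hED_ne_top {s t : Set (ℝ × ℝ)} (hs : s.Finite) (ht : t.Finite) :
    hausdorffEDist (s ∪ diag) (t ∪ diag) ≠ ⊤ := by
  have key : ∀ (u : Set (ℝ × ℝ)), u.Finite → ∀ v : Set (ℝ × ℝ),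
      (⨆ x ∈ u ∪ diag, infEDist x (v ∪ diag)) ≠ ⊤ := by
    intro u hu v
    have hsum : (∑ y ∈ hu.toFinset, edist y (y.1, y.1)) ≠ ⊤ :=
      (ENNReal.sum_lt_top.2 fun y _ => edist_lt_top _ _).ne
    refine ne_top_of_le_ne_top hsum ?_
    refine iSup₂_le fun x hx => ?_
    rcases hx with hx | hx
    · calc infEDist x (v ∪ diag) ≤ edist x (x.1, x.1) :=
        infEDist_le_edist_of_mem (Or.inr rfl)
      _ ≤ _ := Finset.single_le_sum (f := fun y => edist y (y.1, y.1))
        (fun _ _ => zero_le) (hu.mem_toFinset.2 hx)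
    · rw [Metric.infEDist_zero_of_mem (Set.mem_union_right v hx)]; exact zero_le
  rw [hausdorffEDist_def]
  exact (sup_lt_iff.mpr ⟨(key s hs t).lt_top, (key t ht s).lt_top⟩).ne

lemma bd_le {X A B : PD} {ε : ℝ} (hε : 0 ≤ ε)
    (h : ∀ M : PDMatching X A, ∃ M' : PDMatching X B, M'.cost ≤ M.cost + ε) :
    bottleneckDist X B ≤ bottleneckDist X A + ε := by
  have hne : {c | ∃ M : PDMatching X A, M.cost = c}.Nonempty :=
    ⟨_, ⟨⟨0, by simp, by simp⟩, rfl⟩⟩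
  have hbdd : BddBelow {c | ∃ M : PDMatching X B, M.cost = c} := by
    refine ⟨0, ?_⟩
    rintro c ⟨M, rfl⟩
    exact M.cost_nonneg
  have step : bottleneckDist X B - ε ≤ bottleneckDist X A := by
    apply le_csInf hne
    rintro c ⟨M, rfl⟩
    obtain ⟨M', hM'⟩ := h M
    have hle : bottleneckDist X B ≤ M'.cost := csInf_le hbdd ⟨M', rfl⟩
    linarith
  linarith


/-- Using `D_i` instead of `D` changes the bottleneck distance to any diagram `X`
by at most `ε_i = d_H(flat D_i ∪ Δ, flat D ∪ Δ)`. -/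
theorem greedy_sketch_error_bound
    (X D : PD) (n : ℕ) (hn : D.pts.toFinset.card = n) (G : GreedySketch D n)
    (i : ℕ) (hi : i ≤ n) :
    |bottleneckDist X D - bottleneckDist X (G.approx i)| ≤
      hausdorffDist ((G.approx i).flat ∪ diag) (D.flat ∪ diag) := by
  set A := G.approx i with hA
  set f := G.NN i with hf
  set ε := hausdorffDist (A.flat ∪ diag) (D.flat ∪ diag) with hε
  have hεnn : 0 ≤ ε := hausdorffDist_nonneg
  have hApts : A.pts = (D.pts.map f).filter (fun q => q.1 < q.2) := rfl
  have hNN : ∀ b ∈ D.pts, isNearest (prefixSet G.p i ∪ diag) b (f b) :=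
    fun b hb => G.NN_nearest i hi b hb
  have hAflat_sub : A.flat ∪ diag ⊆ prefixSet G.p i ∪ diag := by
    rintro q (hq | hq)
    · have hq' : q ∈ A.pts := hq
      rw [hApts] at hq'
      obtain ⟨b, hb, rfl⟩ := Multiset.mem_map.mp (Multiset.mem_filter.mp hq').1
      exact (hNN b hb).1
    · exact Or.inr hq
  have hAflat_fin : A.flat.Finite := A.pts.finite_toSet
  have hDflat_fin : D.flat.Finite := D.pts.finite_toSet
  have hedist_ne : Metric.hausdorffEDist (A.flat ∪ diag) (D.flat ∪ diag) ≠ ⊤ :=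
    hED_ne_top hAflat_fin hDflat_fin
  have hdistb : ∀ b ∈ D.pts, dist b (f b) ≤ ε := by
    intro b hb
    have hne : (A.flat ∪ diag).Nonempty := ⟨((0:ℝ), (0:ℝ)), Or.inr rfl⟩
    have h2 : edist b (f b) ≤ Metric.infEDist b (A.flat ∪ diag) := by
      refine Metric.le_infEDist.mpr fun y hy => ?_
      rw [edist_dist, edist_dist]
      exact ENNReal.ofReal_le_ofReal ((hNN b hb).2 y (hAflat_sub hy))
    have h1 : dist b (f b) ≤ infDist b (A.flat ∪ diag) := by
      calc dist b (f b) = (edist b (f b)).toReal := by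
            rw [edist_dist, ENNReal.toReal_ofReal dist_nonneg]
        _ ≤ _ := ENNReal.toReal_mono (Metric.infEDist_ne_top hne) h2
    have h3 : infDist b (A.flat ∪ diag) ≤ hausdorffDist (D.flat ∪ diag) (A.flat ∪ diag) :=
      infDist_le_hausdorffDist_of_mem (Set.mem_union_left _ hb)
        (by rwa [Metric.hausdorffEDist_comm] at hedist_ne)
    rw [hausdorffDist_comm] at h3
    linarith
  have hoff : ∀ b ∈ D.pts, ¬((f b).1 < (f b).2) → (f b).1 = (f b).2 := by
    intro b hb hlt
    rcases (hNN b hb).1 with hp | hd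
    · exfalso
      obtain ⟨j, _, hpj⟩ := hp
      have hj : G.p j ∈ D.flat := by rw [← G.range_eq]; exact Set.mem_range_self j
      have habove := D.above _ hj
      rw [hpj] at habove
      exact hlt habove
    · exact hd
  -- Direction 1: transform a matching X–A into a matching X–D
  have dir1 : ∀ M : PDMatching X A, ∃ M' : PDMatching X D, M'.cost ≤ M.cost + ε := by
    intro M
    have hle : M.pairs.map Prod.snd ≤ D.pts.map f := by
      refine M.subB.trans ?_
      rw [hApts]; exact Multiset.filter_le _ _
    obtain ⟨Q, hQt, hQmap⟩ := lift_pairs f M.pairs D.pts hle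
    have hQfst : Q.map Prod.fst = M.pairs.map Prod.fst := by
      rw [← hQmap, Multiset.map_map]; rfl
    have hQsnd : M.pairs.map Prod.snd = (Q.map Prod.snd).map f := by
      rw [← hQmap, Multiset.map_map, Multiset.map_map]; rfl
    have hAun : A.pts - M.pairs.map Prod.snd
        = ((D.pts - Q.map Prod.snd).map f).filter (fun q => q.1 < q.2) := by
      have hself : ((Q.map Prod.snd).map f).filter (fun q => q.1 < q.2)
          = (Q.map Prod.snd).map f := by
        apply Multiset.filter_eq_self.mpr
        intro x hx
        rw [← hQsnd] at hx
        exact A.above x (Multiset.mem_of_le M.subB hx)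
      rw [hApts]
      conv_lhs => rw [← tsub_add_cancel_of_le hQt]
      rw [Multiset.map_add, Multiset.filter_add, hself, hQsnd, add_tsub_cancel_right]
    refine ⟨⟨Q, hQfst ▸ M.subA, hQt⟩, ?_⟩
    apply cost_le_of_forall _ (add_nonneg M.cost_nonneg hεnn)
    · intro pq hpq
      have hb : pq.2 ∈ D.pts := Multiset.mem_of_le hQt (Multiset.mem_map_of_mem _ hpq)
      have hmem : (pq.1, f pq.2) ∈ M.pairs := by
        rw [← hQmap]; exact Multiset.mem_map_of_mem _ hpq
      have h1 : dist pq.1 (f pq.2) ≤ M.cost := by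
        have h := M.cost_pair_le hmem; simpa using h
      have h2 := hdistb pq.2 hb
      calc dist pq.1 pq.2 ≤ dist pq.1 (f pq.2) + dist (f pq.2) pq.2 := dist_triangle _ _ _
        _ = dist pq.1 (f pq.2) + dist pq.2 (f pq.2) := by rw [dist_comm (f pq.2)]
        _ ≤ M.cost + ε := add_le_add h1 h2
    · intro q hq
      rw [hQfst] at hq
      exact (M.cost_unA_le hq).trans (le_add_of_nonneg_right hεnn)
    · intro q hq
      have hbD : q ∈ D.pts := Multiset.mem_of_le tsub_le_self hq
      by_cases hπ : (f q).1 < (f q).2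
      · have hmemA : f q ∈ A.pts - M.pairs.map Prod.snd := by
          rw [hAun]
          exact Multiset.mem_filter.mpr ⟨Multiset.mem_map_of_mem _ hq, hπ⟩
        have h1 : infDist (f q) diag ≤ M.cost := M.cost_unB_le hmemA
        have h2 : infDist q diag ≤ infDist (f q) diag + dist q (f q) :=
          infDist_le_infDist_add_dist
        have h3 := hdistb q hbD
        linarith
      · have hd : (f q).1 = (f q).2 := hoff q hbD hπ
        have h1 : infDist q diag ≤ dist q (f q) := infDist_le_dist_of_mem hd
        have h2 := hdistb q hbD
        have h3 := M.cost_nonneg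
        linarith
  -- Direction 2: transform a matching X–D into a matching X–A
  have dir2 : ∀ M : PDMatching X D, ∃ M' : PDMatching X A, M'.cost ≤ M.cost + ε := by
    intro M
    set P' : Multiset ((ℝ × ℝ) × (ℝ × ℝ)) :=
      (M.pairs.filter (fun pq => (f pq.2).1 < (f pq.2).2)).map
        (fun pq => (pq.1, f pq.2)) with hP'
    have hfst : P'.map Prod.fst
        = (M.pairs.filter (fun pq => (f pq.2).1 < (f pq.2).2)).map Prod.fst := by
      rw [hP', Multiset.map_map]; rfl
    have hsnd : P'.map Prod.snd
        = ((M.pairs.map Prod.snd).map f).filter (fun q => q.1 < q.2) := by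
      rw [hP', Multiset.map_map, Multiset.map_map, Multiset.filter_map]; rfl
    have hsubA : P'.map Prod.fst ≤ X.pts := by
      rw [hfst]
      exact (Multiset.map_le_map (Multiset.filter_le _ _)).trans M.subA
    have hsubB : P'.map Prod.snd ≤ A.pts := by
      rw [hsnd, hApts]
      exact Multiset.filter_le_filter _ (Multiset.map_le_map M.subB)
    refine ⟨⟨P', hsubA, hsubB⟩, ?_⟩
    apply cost_le_of_forall _ (add_nonneg M.cost_nonneg hεnn)
    · intro pq hpq
      obtain ⟨⟨x, b⟩, hxb, rfl⟩ := Multiset.mem_map.mp hpq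
      have hxb' : (x, b) ∈ M.pairs := Multiset.mem_of_le (Multiset.filter_le _ _) hxb
      have hb : b ∈ D.pts := Multiset.mem_of_le M.subB (Multiset.mem_map_of_mem _ hxb')
      have h1 : dist x b ≤ M.cost := M.cost_pair_le hxb'
      have h2 := hdistb b hb
      calc dist (x, f b).1 (x, f b).2 = dist x (f b) := rfl
        _ ≤ dist x b + dist b (f b) := dist_triangle _ _ _
        _ ≤ M.cost + ε := add_le_add h1 h2
    · intro q hq
      have hab : (M.pairs.filter (fun pq => (f pq.2).1 < (f pq.2).2)).map Prod.fst
          + (M.pairs.filter (fun pq => ¬((f pq.2).1 < (f pq.2).2))).map Prod.fst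
          = M.pairs.map Prod.fst := by
        rw [← Multiset.map_add, Multiset.filter_add_not]
      have hXdec : X.pts - (M.pairs.filter (fun pq => (f pq.2).1 < (f pq.2).2)).map Prod.fst
          = (X.pts - M.pairs.map Prod.fst)
            + (M.pairs.filter (fun pq => ¬((f pq.2).1 < (f pq.2).2))).map Prod.fst := by
        rw [msub_split _ _ _ (hab ▸ M.subA), hab]
      rw [hfst, hXdec] at hq
      rcases Multiset.mem_add.mp hq with hq | hq
      · exact (M.cost_unA_le hq).trans (le_add_of_nonneg_right hεnn)
      · obtain ⟨⟨x, b⟩, hxb, rfl⟩ := Multiset.mem_map.mp hq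
        have hmem := Multiset.mem_filter.mp hxb
        have hxbM : (x, b) ∈ M.pairs := hmem.1
        have hbD : b ∈ D.pts := Multiset.mem_of_le M.subB (Multiset.mem_map_of_mem _ hxbM)
        have hfd : (f b).1 = (f b).2 := hoff b hbD (by simpa using hmem.2)
        have h1 : infDist (x, b).1 diag ≤ dist x (f b) := infDist_le_dist_of_mem hfd
        have h2 : dist x b ≤ M.cost := M.cost_pair_le hxbM
        have h3 := hdistb b hbD
        have h4 := dist_triangle x b (f b)
        calc infDist (x, b).1 diag ≤ dist x (f b) := h1
          _ ≤ M.cost + ε := by linarith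
    · intro q hq
      have hAdec : A.pts - P'.map Prod.snd
          = ((D.pts - M.pairs.map Prod.snd).map f).filter (fun q => q.1 < q.2) := by
        rw [hsnd, hApts]
        conv_lhs => rw [← tsub_add_cancel_of_le M.subB]
        rw [Multiset.map_add, Multiset.filter_add, add_tsub_cancel_right]
      rw [hAdec] at hq
      obtain ⟨b, hb, rfl⟩ := Multiset.mem_map.mp (Multiset.mem_filter.mp hq).1
      have hbD : b ∈ D.pts := Multiset.mem_of_le tsub_le_self hb
      have h1 : infDist b diag ≤ M.cost := M.cost_unB_le hb
      have h2 : infDist (f b) diag ≤ infDist b diag + dist (f b) b :=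
        infDist_le_infDist_add_dist
      have h3 := hdistb b hbD
      rw [dist_comm] at h2
      linarith
  have h1 : bottleneckDist X D ≤ bottleneckDist X A + ε := bd_le hεnn dir1
  have h2 : bottleneckDist X A ≤ bottleneckDist X D + ε := bd_le hεnn dir2
  rw [abs_sub_le_iff]
  constructor <;> linarith
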